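/- Assume the standing hypotheses on (α,β) and p, and additionally p > n̂ + 1. For every integer k with b₁ + 1 ≤ k ≤ p − 1, the rational function (t+k)²·R(t) is regular at t = −k (R has a pole of order at most 2 there), and the value B_k at t = −k of its derivative (d/dt)[(t+k)²·R(t)] is a rational number with p-adic valuation at least 1 (that is, B_k ≡ 0 mod p). -/

import Mathlib

open scoped BigOperators
open Polynomial

noncomputable section
section Helpers
variable {p : ℕ} [hp : Fact p.Prime]

lemma pnorm_sum_le {ι : Type*} (s : Finset ι) (f : ι → ℚ_[p]) {C : ℝ} (hC : 0 ≤ C)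
    (h : ∀ i ∈ s, ‖f i‖ ≤ C) : ‖∑ i ∈ s, f i‖ ≤ C := by
  classical
  induction s using Finset.cons_induction with
  | empty => simpa using hC
  | cons a s ha ih =>
    rw [Finset.sum_cons]
    exact le_trans (Padic.nonarchimedean _ _)
      (max_le (h a (by simp)) (ih fun i hi => h i (by simp [hi])))

lemma pnorm_int_eq_one (z : ℤ) (hd : ¬ ((p:ℤ) ∣ z)) : ‖(z : ℚ_[p])‖ = 1 := by
  refine le_antisymm (Padic.norm_int_le_one z) ?_
  by_contra hlt
  exact hd ((Padic.norm_intCast_lt_one_iff (k := z)).1 (lt_of_not_ge hlt))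

lemma pnorm_int_unit (z : ℤ) (h0 : z ≠ 0) (habs : z.natAbs < p) : ‖(z : ℚ_[p])‖ = 1 := by
  refine pnorm_int_eq_one z fun hd => ?_
  have h1 : p ∣ z.natAbs := Int.natCast_dvd_natCast.mp (by simpa using Int.dvd_natAbs.mpr hd)
  have h2 : z.natAbs ≠ 0 := fun h => h0 (Int.natAbs_eq_zero.mp h)
  have := Nat.le_of_dvd (Nat.pos_of_ne_zero h2) h1
  omega

lemma eval_derivative_prod {ι : Type*} [DecidableEq ι] (s : Finset ι) (f : ι → ℚ[X]) (x : ℚ) :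
    (derivative (∏ i ∈ s, f i)).eval x
      = ∑ i ∈ s, (derivative (f i)).eval x * ∏ j ∈ s.erase i, (f j).eval x := by
  induction s using Finset.cons_induction with
  | empty => simp
  | cons a s ha ih =>
    rw [Finset.prod_cons, derivative_mul, eval_add, eval_mul, eval_mul, ih, Finset.sum_cons,
      Finset.erase_cons, Finset.mul_sum, eval_prod]
    congr 1
    refine Finset.sum_congr rfl fun i hi => ?_
    have hne : i ≠ a := fun hh => ha (hh ▸ hi)
    rw [Finset.erase_cons_of_ne ha hne.symm, Finset.prod_cons]
    ring

lemma pnorm_sub_le_max (a b : ℚ_[p]) : ‖a - b‖ ≤ max ‖a‖ ‖b‖ := by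
  rw [sub_eq_add_neg]
  simpa [norm_neg] using Padic.nonarchimedean a (-b)

lemma pnorm_nat_unit (m : ℕ) (h0 : m ≠ 0) (hlt : m < p) : ‖((m : ℕ) : ℚ_[p])‖ = 1 := by
  have : ((m : ℕ) : ℚ_[p]) = ((m : ℤ) : ℚ_[p]) := by push_cast; ring
  rw [this]
  exact pnorm_int_unit _ (by exact_mod_cast h0) (by omega)

lemma pcast_prod {ι : Type*} (s : Finset ι) (f : ι → ℚ) :
    ((∏ i ∈ s, f i : ℚ) : ℚ_[p]) = ∏ i ∈ s, ((f i : ℚ) : ℚ_[p]) := by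
  simpa using map_prod (Rat.castHom ℚ_[p]) f s

lemma pcast_sum {ι : Type*} (s : Finset ι) (f : ι → ℚ) :
    ((∑ i ∈ s, f i : ℚ) : ℚ_[p]) = ∑ i ∈ s, ((f i : ℚ) : ℚ_[p]) := by
  simpa using map_sum (Rat.castHom ℚ_[p]) f s

lemma nat_eq_p_of_dvd {v : ℕ} (h : p ∣ v) (h0 : 0 < v) (h2 : v < 2 * p) : v = p := by
  rcases h with ⟨c, rfl⟩
  match c with
  | 0 => omega
  | 1 => omega
  | (c + 2) =>
    exfalso
    have : p * 2 ≤ p * (c + 2) := Nat.mul_le_mul_left _ (by omega)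
    omega

end Helpers


/-- The rising factorial (Pochhammer symbol) `(a)_k` for a rational `a`. -/
def poch (a : ℚ) (k : ℕ) : ℚ := Polynomial.eval a (ascPochhammer ℚ k)

/-- The numerator `N(t) = ∏_{i=2}^{n} ∏_{j=0}^{p−aᵢ−2} (t + 1 − rᵢ − p + j)` of the rational
function `R(t)`, as a polynomial (`r`, `a` are 0-based: `rᵢ = r (i−1)`, `aᵢ = a (i−1)`). -/
def Rnum (n p : ℕ) (r : ℕ → ℚ) (a : ℕ → ℕ) : ℚ[X] :=
  ∏ i ∈ Finset.Icc 2 n, ∏ j ∈ Finset.range (p - a (i - 1) - 1),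
    (X + C (1 - r (i - 1) - (p : ℚ) + (j : ℚ)))

/-- The denominator `D(t)` of `R(t)` with the square factor `(t + b₁ + 1 + j)²` at
`j = k − b₁ − 1` removed; i.e. the denominator of `(t+k)²·R(t)` near `t = −k` for
`b₁ + 1 ≤ k ≤ p − 1`.  Here `a₁ = a 0`, `b₁ = b 0`, `bᵢ = b (i−1)`. -/
def RdenNoK (p nhat : ℕ) (a1 b1 : ℕ) (b : ℕ → ℕ) (k : ℕ) : ℚ[X] :=
  (∏ j ∈ Finset.range (a1 + 1), (X + C (j : ℚ)) ^ 2) *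
    (∏ j ∈ Finset.range (b1 - a1), (X + C ((a1 : ℚ) + 1 + j))) *
    (∏ j ∈ (Finset.range (p - b1 - 1)).filter (fun j => j ≠ k - b1 - 1),
      (X + C ((b1 : ℚ) + 1 + j)) ^ 2) *
    ∏ i ∈ Finset.Icc 2 nhat, ∏ j ∈ Finset.range (p - b (i - 1) - 1),
      (-X + C (1 + (i : ℚ) * p + (j : ℚ)))


/-- integral part of the denominator: all non-special factors. -/
def denP (p nhat a1 b1 : ℕ) (b : ℕ → ℕ) (k : ℕ) : ℚ[X] :=
  (∏ j ∈ Finset.range (a1 + 1), (X + C (j : ℚ)) ^ 2) *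
    (∏ j ∈ Finset.range (b1 - a1), (X + C ((a1 : ℚ) + 1 + j))) *
    (∏ j ∈ (Finset.range (p - b1 - 1)).filter (fun j => j ≠ k - b1 - 1),
      (X + C ((b1 : ℚ) + 1 + j)) ^ 2) *
    ∏ i ∈ Finset.Icc 2 nhat, ∏ j ∈ (Finset.range (p - b (i - 1) - 1)).filter
        (fun j => j ≠ p - 1 - k),
      (-X + C (1 + (i : ℚ) * p + (j : ℚ)))

def denPZ (p nhat a1 b1 : ℕ) (b : ℕ → ℕ) (k : ℕ) : ℤ[X] :=
  (∏ j ∈ Finset.range (a1 + 1), (X + C (j : ℤ)) ^ 2) *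
    (∏ j ∈ Finset.range (b1 - a1), (X + C ((a1 : ℤ) + 1 + j))) *
    (∏ j ∈ (Finset.range (p - b1 - 1)).filter (fun j => j ≠ k - b1 - 1),
      (X + C ((b1 : ℤ) + 1 + j)) ^ 2) *
    ∏ i ∈ Finset.Icc 2 nhat, ∏ j ∈ (Finset.range (p - b (i - 1) - 1)).filter
        (fun j => j ≠ p - 1 - k),
      (-X + C (1 + (i : ℤ) * p + (j : ℤ)))

def denE (p nhat : ℕ) (b : ℕ → ℕ) (k : ℕ) : ℚ[X] :=
  ∏ i ∈ (Finset.Icc 2 nhat).filter (fun i => b (i - 1) < k),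
    (-X + C (1 + (i : ℚ) * p + ((p - 1 - k : ℕ) : ℚ)))

lemma denP_map (p nhat a1 b1 : ℕ) (b : ℕ → ℕ) (k : ℕ) :
    (denPZ p nhat a1 b1 b k).map (Int.castRingHom ℚ) = denP p nhat a1 b1 b k := by
  unfold denP denPZ
  simp only [Polynomial.map_mul, Polynomial.map_prod, Polynomial.map_pow, Polynomial.map_add,
    Polynomial.map_neg, Polynomial.map_X, Polynomial.map_C, Int.coe_castRingHom]
  norm_cast

lemma rden_split (p nhat a1 b1 k : ℕ) (b : ℕ → ℕ) (hp2 : 2 ≤ p) (hkp : k ≤ p - 1) :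
    RdenNoK p nhat a1 b1 b k = denP p nhat a1 b1 b k * denE p nhat b k := by
  classical
  unfold RdenNoK denP denE
  rw [Finset.prod_filter (p := fun i => b (i - 1) < k)]
  conv_rhs => rw [mul_assoc]
  congr 1
  rw [← Finset.prod_mul_distrib]
  refine Finset.prod_congr rfl fun i _ => ?_
  by_cases hbk : b (i - 1) < k
  · have hmem : p - 1 - k ∈ Finset.range (p - b (i - 1) - 1) := by
      simp only [Finset.mem_range]; omega
    rw [if_pos hbk, Finset.filter_ne']
    exact (Finset.prod_erase_mul _ _ hmem).symm
  · have hmem : p - 1 - k ∉ Finset.range (p - b (i - 1) - 1) := by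
      simp only [Finset.mem_range]; omega
    rw [if_neg hbk, Finset.filter_ne', Finset.erase_eq_of_notMem hmem, mul_one]


set_option maxHeartbeats 2000000 in
/-- Under the standing hypotheses on `(α,β)` and `p ≡ 1 (mod M)` with
`p > n̂ + 1`: for every `k` with `b₁ + 1 ≤ k ≤ p − 1`, the rational function `(t+k)²·R(t)` is
regular at `t = −k` (`R` has a pole of order at most `2` there), and the value `B_k` of its
derivative `(d/dt)[(t+k)²·R(t)]` at `t = −k` satisfies `B_k ≡ 0 (mod p)`. -/
theorem residue_Bk_vanishes_mod_p_far_range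
    (n : ℕ) (hn : 2 ≤ n)
    (r q : ℕ → ℚ)
    (hr_pos : ∀ i, i < n → 0 < r i) (hr_lt : ∀ i, i < n → r i < 1)
    (hr_mono : ∀ i j, i ≤ j → j < n → r i ≤ r j)
    (hq_pos : ∀ i, i < n → 0 < q i)
    (hq_mono : ∀ i j, i ≤ j → j < n → q i ≤ q j)
    (hq_top : q (n - 1) = 1) (hq_top' : q (n - 2) = 1)
    (hqr : ∀ j, j + 2 < n → r (j + 2) < q j)
    (hprim : ∀ i, i < n → ∀ j, j < n → ∀ z : ℤ, r i - q j ≠ (z : ℚ))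
    (M : ℕ) (hM : 0 < M)
    (hMr : ∀ i, i < n → ∃ z : ℤ, (M : ℚ) * r i = (z : ℚ))
    (hMq : ∀ i, i < n → ∃ z : ℤ, (M : ℚ) * q i = (z : ℚ))
    (p : ℕ) [Fact (Nat.Prime p)] (hpM : p ≡ 1 [MOD M])
    (a b : ℕ → ℕ)
    (ha : ∀ i, i < n → (a i : ℚ) = ((p : ℚ) - 1) * r i)
    (hb : ∀ i, i < n → (b i : ℚ) = ((p : ℚ) - 1) * q i)
    (nhat : ℕ) (hnhat_le : nhat ≤ n) (hnhat0 : nhat = 0 ∨ 2 ≤ nhat)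
    (hnhat : ∀ i, 2 ≤ i → i ≤ n → (q (i - 1) < 1 ↔ i ≤ nhat))
    (hp_nhat : nhat + 1 < p)
    (k : ℕ) (hk : b 0 + 1 ≤ k) (hk' : k ≤ p - 1) :
    -- `(t+k)²·R(t) = N(t)/RdenNoK(t)` is regular at `t = −k`:
    (RdenNoK p nhat (a 0) (b 0) b k).eval (-(k : ℚ)) ≠ 0 ∧
      -- and `B_k = ((t+k)²R)'(−k) = (N'·D₀ − N·D₀')/D₀²` at `t = −k` is `≡ 0 mod p`:
      ∃ c : ℤ_[p],
        ((((derivative (Rnum n p r a)).eval (-(k : ℚ)) *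
              (RdenNoK p nhat (a 0) (b 0) b k).eval (-(k : ℚ)) -
            (Rnum n p r a).eval (-(k : ℚ)) *
              (derivative (RdenNoK p nhat (a 0) (b 0) b k)).eval (-(k : ℚ))) /
            ((RdenNoK p nhat (a 0) (b 0) b k).eval (-(k : ℚ))) ^ 2 : ℚ) : ℚ_[p])
          = (p : ℚ_[p]) * (c : ℚ_[p]) := by
  classical
  have hpp : p.Prime := Fact.out
  have hp2 : 2 ≤ p := hpp.two_le
  -- rule out n = 2
  have hn3 : 3 ≤ n := by
    by_contra hcon
    have hn2 : n = 2 := by omega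
    have hq0 : q 0 = 1 := by
      have := hq_top'
      rw [hn2] at this
      simpa using this
    have hb0 : (b 0 : ℚ) = ((p - 1 : ℕ) : ℚ) := by
      rw [hb 0 (by omega), hq0, Nat.cast_sub (by omega : 1 ≤ p)]
      ring
    have : b 0 = p - 1 := by exact_mod_cast hb0
    omega
  have hp1q : (0 : ℚ) < (p : ℚ) - 1 := by
    have : (2 : ℚ) ≤ (p : ℚ) := by exact_mod_cast hp2
    linarith
  -- comparison of a,b via r,q
  have hblt : ∀ i, i < n → ∀ j, j < n → r i < q j → a i < b j := by
    intro i hi j hj h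
    have : (a i : ℚ) < (b j : ℚ) := by
      rw [ha i hi, hb j hj]
      exact mul_lt_mul_of_pos_left h hp1q
    exact_mod_cast this
  have hamono : ∀ i j, i ≤ j → j < n → a i ≤ a j := by
    intro i j hij hj
    have : (a i : ℚ) ≤ (a j : ℚ) := by
      rw [ha i (by omega), ha j hj]
      exact mul_le_mul_of_nonneg_left (hr_mono i j hij hj) (le_of_lt hp1q)
    exact_mod_cast this
  have hqle1 : ∀ i, i < n → q i ≤ 1 := by
    intro i hi
    have := hq_mono i (n - 1) (by omega) (by omega)
    rw [hq_top] at this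
    exact this
  have hbub : ∀ i, i < n → b i ≤ p - 1 := by
    intro i hi
    have : (b i : ℚ) ≤ ((p - 1 : ℕ) : ℚ) := by
      rw [hb i hi, Nat.cast_sub (by omega : 1 ≤ p)]
      push_cast
      nlinarith [hqle1 i hi, hq_pos i hi]
    exact_mod_cast this
  have hbpos : ∀ i, i < n → 1 ≤ b i := by
    intro i hi
    have : (0 : ℚ) < (b i : ℚ) := by
      rw [hb i hi]
      exact mul_pos hp1q (hq_pos i hi)
    have : b i ≠ 0 := by
      intro h
      rw [h] at this
      simp at this
    omega
  have haub : ∀ i, i < n → a i ≤ p - 2 := by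
    intro i hi
    have h1 : (a i : ℚ) < ((p - 1 : ℕ) : ℚ) := by
      rw [ha i hi, Nat.cast_sub (by omega : 1 ≤ p)]
      push_cast
      nlinarith [hr_lt i hi, hr_pos i hi]
    have : a i < p - 1 := by exact_mod_cast h1
    omega
  have hapos : ∀ i, i < n → 1 ≤ a i := by
    intro i hi
    have : (0 : ℚ) < (a i : ℚ) := by
      rw [ha i hi]
      exact mul_pos hp1q (hr_pos i hi)
    have : a i ≠ 0 := by
      intro h
      rw [h] at this
      simp at this
    omega
  have hnhat2 : nhat ≤ n - 2 := by
    rcases hnhat0 with h0 | h2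
    · omega
    · have hiff := hnhat (n - 1) (by omega) (by omega)
      rw [show n - 1 - 1 = n - 2 by omega, hq_top'] at hiff
      have : ¬ (n - 1 ≤ nhat) := by
        intro hle
        have := hiff.2 hle
        linarith
      omega
  have hb0k : b 0 < k := by omega
  have ha2b0 : a 2 < b 0 := hblt 2 (by omega) 0 (by omega) (hqr 0 (by omega))
  have ha0k : a 0 < k := by
    have := hamono 0 2 (by omega) (by omega)
    omega
  have hkp : k < p := by omega
  -- the sets Dk and Good
  set Dk : Finset ℕ := (Finset.Icc 2 nhat).filter (fun i => b (i - 1) < k) with hDkdef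
  set m : ℕ := Dk.card with hmdef
  set Good : Finset ℕ := ({2, 3} : Finset ℕ) ∪ Dk.image (· + 2) with hGooddef
  have hDk_mem : ∀ i ∈ Dk, 2 ≤ i ∧ i ≤ nhat ∧ b (i - 1) < k := by
    intro i hi
    rw [hDkdef, Finset.mem_filter, Finset.mem_Icc] at hi
    exact ⟨hi.1.1, hi.1.2, hi.2⟩
  have hGood_spec : ∀ i ∈ Good, 2 ≤ i ∧ i ≤ n ∧ a (i - 1) < k := by
    intro i hi
    rw [hGooddef, Finset.mem_union] at hi
    rcases hi with hi | hi
    · simp only [Finset.mem_insert, Finset.mem_singleton] at hi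
      rcases hi with rfl | rfl
      · refine ⟨by omega, by omega, ?_⟩
        have h12 := hamono 1 2 (by omega) (by omega)
        have he : a (2 - 1) = a 1 := rfl
        omega
      · refine ⟨by omega, by omega, ?_⟩
        have he : a (3 - 1) = a 2 := rfl
        omega
    · rw [Finset.mem_image] at hi
      obtain ⟨d, hd, rfl⟩ := hi
      obtain ⟨hd2, hdn, hdk⟩ := hDk_mem d hd
      have hdlt : d + 1 < n := by omega
      have harq : r ((d - 1) + 2) < q (d - 1) := hqr (d - 1) (by omega)
      rw [show (d - 1) + 2 = d + 1 by omega] at harq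
      have : a (d + 1) < b (d - 1) := hblt (d + 1) hdlt (d - 1) (by omega) harq
      exact ⟨by omega, by omega, by rw [show d + 2 - 1 = d + 1 by omega]; omega⟩
  have hGood_sub : Good ⊆ Finset.Icc 2 n := by
    intro i hi
    have := hGood_spec i hi
    rw [Finset.mem_Icc]
    omega
  have hGood_card : Good.card = 2 + m := by
    rw [hGooddef, Finset.card_union_of_disjoint, Finset.card_image_of_injective _
      (add_left_injective 2)]
    · rfl
    · rw [Finset.disjoint_left]
      intro x hx hx2
      rw [Finset.mem_image] at hx2
      obtain ⟨d, hd, rfl⟩ := hx2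
      have := hDk_mem d hd
      simp only [Finset.mem_insert, Finset.mem_singleton] at hx
      omega
  -- norms of r
  have hpsub1 : ‖((p : ℚ_[p]) - 1)‖ = 1 := by
    have h : ((p : ℚ_[p]) - 1) = (((p : ℤ) - 1 : ℤ) : ℚ_[p]) := by push_cast; ring
    rw [h]
    exact pnorm_int_unit _ (by omega) (by omega)
  have hru : ∀ i, i < n → ‖((r i : ℚ) : ℚ_[p])‖ ≤ 1 := by
    intro i hi
    have hri : (r i : ℚ) = (a i : ℚ) / ((p : ℚ) - 1) := by
      rw [ha i hi]
      field_simp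
    rw [hri]
    push_cast
    rw [norm_div, hpsub1, div_one]
    have : ((a i : ℚ_[p])) = (((a i : ℤ)) : ℚ_[p]) := by push_cast; ring
    rw [this]
    exact Padic.norm_int_le_one _
  -- numerator blocks
  set x : ℚ := -(k : ℚ) with hxdef
  set Bl : ℕ → ℚ[X] := fun i => ∏ j ∈ Finset.range (p - a (i - 1) - 1),
    (X + C (1 - r (i - 1) - (p : ℚ) + (j : ℚ))) with hBldef
  have hRnumBl : Rnum n p r a = ∏ i ∈ Finset.Icc 2 n, Bl i := rfl
  set blv : ℕ → ℚ := fun i => ∏ j ∈ Finset.range (p - a (i - 1) - 1),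
    (x + (1 - r (i - 1) - (p : ℚ) + (j : ℚ))) with hblvdef
  have hBl_eval : ∀ i, (Bl i).eval x = blv i := by
    intro i
    rw [hBldef, hblvdef]
    simp [eval_prod]
  -- numerator factor bounds
  have hfac_le : ∀ i, 2 ≤ i → i ≤ n → ∀ j : ℕ,
      ‖((x + (1 - r (i - 1) - (p : ℚ) + (j : ℚ)) : ℚ) : ℚ_[p])‖ ≤ 1 := by
    intro i hi2 hin j
    have hkey : (x + (1 - r (i - 1) - (p : ℚ) + (j : ℚ)) : ℚ)
        = ((1 - (k : ℤ) - (p : ℤ) + (j : ℤ) : ℤ) : ℚ) - r (i - 1) := by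
      rw [hxdef]
      push_cast
      ring
    rw [hkey, Rat.cast_sub]
    refine le_trans (pnorm_sub_le_max _ _) (max_le ?_ (hru (i - 1) (by omega)))
    rw [Rat.cast_intCast]
    exact Padic.norm_int_le_one _
  have hfac_sp : ∀ i, 2 ≤ i → i ≤ n → a (i - 1) < k →
      ‖((x + (1 - r (i - 1) - (p : ℚ) + ((k - a (i - 1) - 1 : ℕ) : ℚ)) : ℚ) : ℚ_[p])‖
        ≤ (p : ℝ)⁻¹ := by
    intro i hi2 hin hak
    have hin' : i - 1 < n := by omega
    have hj0 : ((k - a (i - 1) - 1 : ℕ) : ℚ) = (k : ℚ) - (a (i - 1) : ℚ) - 1 := by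
      rw [show k - a (i - 1) - 1 = k - (a (i - 1) + 1) by omega,
        Nat.cast_sub (by omega : a (i - 1) + 1 ≤ k)]
      push_cast
      ring
    have hkey : (x + (1 - r (i - 1) - (p : ℚ) + ((k - a (i - 1) - 1 : ℕ) : ℚ)) : ℚ)
        = -((p : ℚ) * (((p : ℚ) - 1 + (a (i - 1) : ℚ)) / ((p : ℚ) - 1))) := by
      rw [hxdef, hj0]
      have har := ha (i - 1) hin'
      field_simp
      nlinarith [har]
    rw [hkey]
    push_cast
    rw [norm_neg, norm_mul, norm_div, hpsub1, div_one, Padic.norm_p]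
    have h1 : ‖((p : ℚ_[p]) - 1 + (a (i - 1) : ℚ_[p]))‖ ≤ 1 := by
      have h : ((p : ℚ_[p]) - 1 + (a (i - 1) : ℚ_[p]))
          = (((p : ℤ) - 1 + (a (i - 1) : ℤ) : ℤ) : ℚ_[p]) := by push_cast; ring
      rw [h]
      exact Padic.norm_int_le_one _
    have hppos : (0 : ℝ) < (p : ℝ)⁻¹ := by positivity
    nlinarith
  -- block bounds
  have hbl_le1 : ∀ i, 2 ≤ i → i ≤ n → ‖((blv i : ℚ) : ℚ_[p])‖ ≤ 1 := by
    intro i hi2 hin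
    rw [hblvdef]
    simp only
    rw [pcast_prod, norm_prod]
    exact Finset.prod_le_one (fun j _ => norm_nonneg _) (fun j _ => hfac_le i hi2 hin j)
  have hbl_lep : ∀ i, 2 ≤ i → i ≤ n → a (i - 1) < k → ‖((blv i : ℚ) : ℚ_[p])‖ ≤ (p : ℝ)⁻¹ := by
    intro i hi2 hin hak
    have hj0mem : k - a (i - 1) - 1 ∈ Finset.range (p - a (i - 1) - 1) := by
      rw [Finset.mem_range]
      omega
    rw [hblvdef]
    simp only
    rw [pcast_prod, norm_prod, ← Finset.prod_erase_mul _ _ hj0mem]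
    have h1 : ∏ j ∈ (Finset.range (p - a (i - 1) - 1)).erase (k - a (i - 1) - 1),
        ‖((x + (1 - r (i - 1) - (p : ℚ) + (j : ℚ)) : ℚ) : ℚ_[p])‖ ≤ 1 :=
      Finset.prod_le_one (fun j _ => norm_nonneg _) (fun j _ => hfac_le i hi2 hin j)
    have h2 := hfac_sp i hi2 hin hak
    have h3 : (0 : ℝ) ≤ (p : ℝ)⁻¹ := by positivity
    nlinarith [Finset.prod_nonneg (fun j (_ : j ∈ (Finset.range (p - a (i - 1) - 1)).erase
      (k - a (i - 1) - 1)) => norm_nonneg (((x + (1 - r (i - 1) - (p : ℚ) + (j : ℚ)) : ℚ) : ℚ_[p])))]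
  -- product over subsets bound
  have hprod_good : ∀ S : Finset ℕ, S ⊆ Finset.Icc 2 n →
      (∏ i ∈ S, ‖((blv i : ℚ) : ℚ_[p])‖) ≤ ((p : ℝ)⁻¹) ^ (S ∩ Good).card := by
    intro S hS
    have step1 : (∏ i ∈ S, ‖((blv i : ℚ) : ℚ_[p])‖)
        ≤ ∏ i ∈ S, (if i ∈ Good then (p : ℝ)⁻¹ else 1) := by
      refine Finset.prod_le_prod (fun i _ => norm_nonneg _) (fun i hi => ?_)
      have hIcc := hS hi
      rw [Finset.mem_Icc] at hIcc
      by_cases hg : i ∈ Good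
      · rw [if_pos hg]
        exact hbl_lep i hIcc.1 hIcc.2 (hGood_spec i hg).2.2
      · rw [if_neg hg]
        exact hbl_le1 i hIcc.1 hIcc.2
    have step2 : (∏ i ∈ S, (if i ∈ Good then (p : ℝ)⁻¹ else 1))
        = ((p : ℝ)⁻¹) ^ (S ∩ Good).card := by
      rw [Finset.prod_ite, Finset.prod_const, Finset.prod_const_one, mul_one,
        Finset.filter_mem_eq_inter]
    rw [step2] at step1
    exact step1
  have hIccGood : (Finset.Icc 2 n ∩ Good).card = 2 + m := by
    rw [Finset.inter_eq_right.mpr hGood_sub, hGood_card]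
  have hpinv_le1 : (p : ℝ)⁻¹ ≤ 1 := by
    rw [inv_le_one_iff₀]
    right
    exact_mod_cast by omega
  have hpinv_pos : (0 : ℝ) < (p : ℝ)⁻¹ := by positivity
  -- norm of N
  have hN_norm : ‖(((Rnum n p r a).eval x : ℚ) : ℚ_[p])‖ ≤ ((p : ℝ)⁻¹) ^ (2 + m) := by
    rw [hRnumBl, eval_prod]
    rw [pcast_prod, norm_prod]
    calc (∏ i ∈ Finset.Icc 2 n, ‖(((Bl i).eval x : ℚ) : ℚ_[p])‖)
        = ∏ i ∈ Finset.Icc 2 n, ‖((blv i : ℚ) : ℚ_[p])‖ := by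
          refine Finset.prod_congr rfl fun i _ => by rw [hBl_eval]
      _ ≤ ((p : ℝ)⁻¹) ^ ((Finset.Icc 2 n ∩ Good).card) := hprod_good _ (subset_refl _)
      _ = ((p : ℝ)⁻¹) ^ (2 + m) := by rw [hIccGood]
  -- norm of N'
  have herase_card : ∀ i : ℕ, 1 + m ≤ (((Finset.Icc 2 n).erase i) ∩ Good).card := by
    intro i
    rw [Finset.erase_inter, Finset.inter_eq_right.mpr hGood_sub]
    by_cases hi : i ∈ Good
    · rw [Finset.card_erase_of_mem hi, hGood_card]
      omega
    · rw [Finset.erase_eq_of_notMem hi, hGood_card]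
      omega
  have hN'_norm : ‖(((derivative (Rnum n p r a)).eval x : ℚ) : ℚ_[p])‖
      ≤ ((p : ℝ)⁻¹) ^ (1 + m) := by
    rw [hRnumBl, eval_derivative_prod]
    rw [pcast_sum]
    refine pnorm_sum_le _ _ (by positivity) (fun i hi => ?_)
    rw [Finset.mem_Icc] at hi
    rw [Rat.cast_mul, norm_mul]
    have hd : ‖(((derivative (Bl i)).eval x : ℚ) : ℚ_[p])‖ ≤ 1 := by
      rw [hBldef]
      simp only
      rw [eval_derivative_prod, pcast_sum]
      refine pnorm_sum_le _ _ (by norm_num) (fun j hj => ?_)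
      have hdj : derivative (X + C (1 - r (i - 1) - (p : ℚ) + (j : ℚ))) = 1 := by
        simp
      rw [hdj, Rat.cast_mul, norm_mul]
      have h1 : ‖((eval x (1 : ℚ[X]) : ℚ) : ℚ_[p])‖ = 1 := by simp
      rw [h1, one_mul, pcast_prod, norm_prod]
      refine Finset.prod_le_one (fun j' _ => norm_nonneg _) (fun j' _ => ?_)
      simp only [eval_add, eval_X, eval_C]
      exact hfac_le i hi.1 hi.2 j'
    have hprod : ‖((∏ i' ∈ (Finset.Icc 2 n).erase i, (Bl i').eval x : ℚ) : ℚ_[p])‖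
        ≤ ((p : ℝ)⁻¹) ^ (1 + m) := by
      rw [pcast_prod, norm_prod]
      calc (∏ i' ∈ (Finset.Icc 2 n).erase i, ‖(((Bl i').eval x : ℚ) : ℚ_[p])‖)
          = ∏ i' ∈ (Finset.Icc 2 n).erase i, ‖((blv i' : ℚ) : ℚ_[p])‖ := by
            refine Finset.prod_congr rfl fun i' _ => by rw [hBl_eval]
        _ ≤ ((p : ℝ)⁻¹) ^ ((((Finset.Icc 2 n).erase i) ∩ Good).card) :=
            hprod_good _ (Finset.erase_subset _ _)
        _ ≤ ((p : ℝ)⁻¹) ^ (1 + m) :=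
            pow_le_pow_of_le_one (le_of_lt hpinv_pos) hpinv_le1 (herase_card i)
    calc ‖(((derivative (Bl i)).eval x : ℚ) : ℚ_[p])‖
          * ‖((∏ i' ∈ (Finset.Icc 2 n).erase i, (Bl i').eval x : ℚ) : ℚ_[p])‖
        ≤ 1 * (((p : ℝ)⁻¹) ^ (1 + m)) :=
          mul_le_mul hd hprod (norm_nonneg _) (by norm_num)
      _ = ((p : ℝ)⁻¹) ^ (1 + m) := by ring
  -- denominator analysis
  have hsplit := rden_split p nhat (a 0) (b 0) k b hp2 hk'
  have hnhatn : ∀ i, 2 ≤ i → i ≤ nhat → i - 1 < n := by intro i h2 hle; omega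
  have hEfac_val : ∀ i, 2 ≤ i → i ≤ nhat →
      (-x + (1 + (i : ℚ) * p + ((p - 1 - k : ℕ) : ℚ)) : ℚ) = (((i + 1) * p : ℕ) : ℚ) := by
    intro i h2 hle
    rw [hxdef, show p - 1 - k = p - (1 + k) by omega,
      Nat.cast_sub (by omega : 1 + k ≤ p)]
    push_cast
    ring
  have hEfac_norm : ∀ i, 2 ≤ i → i ≤ nhat →
      ‖((-x + (1 + (i : ℚ) * p + ((p - 1 - k : ℕ) : ℚ)) : ℚ) : ℚ_[p])‖ = (p : ℝ)⁻¹ := by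
    intro i h2 hle
    rw [hEfac_val i h2 hle]
    push_cast
    rw [norm_mul, Padic.norm_p]
    have h1 : ‖((i : ℚ_[p]) + 1)‖ = 1 := by
      have hh : ((i : ℚ_[p]) + 1) = (((i + 1 : ℕ) : ℕ) : ℚ_[p]) := by push_cast; ring
      rw [hh]
      exact pnorm_nat_unit _ (by omega) (by omega)
    rw [h1, one_mul]
  have hE_norm : ‖(((denE p nhat b k).eval x : ℚ) : ℚ_[p])‖ = ((p : ℝ)⁻¹) ^ m := by
    unfold denE
    rw [eval_prod]
    simp only [eval_add, eval_neg, eval_X, eval_C]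
    rw [pcast_prod, norm_prod]
    rw [show (Finset.Icc 2 nhat).filter (fun i => b (i - 1) < k) = Dk from hDkdef.symm]
    rw [Finset.prod_congr rfl (fun i hi => by
      have := hDk_mem i hi
      exact hEfac_norm i this.1 this.2.1), Finset.prod_const, hmdef]
  -- unit factors of denP
  have hB1 : ∀ j ∈ Finset.range (a 0 + 1), ‖((x + (j : ℚ) : ℚ) : ℚ_[p])‖ = 1 := by
    intro j hj
    rw [Finset.mem_range] at hj
    have hh : (x + (j : ℚ) : ℚ) = (((j : ℤ) - (k : ℤ) : ℤ) : ℚ) := by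
      rw [hxdef]; push_cast; ring
    rw [hh, Rat.cast_intCast]
    exact pnorm_int_unit _ (by omega) (by omega)
  have hB2 : ∀ j ∈ Finset.range (b 0 - a 0), ‖((x + ((a 0 : ℚ) + 1 + j) : ℚ) : ℚ_[p])‖ = 1 := by
    intro j hj
    rw [Finset.mem_range] at hj
    have hh : (x + ((a 0 : ℚ) + 1 + j) : ℚ)
        = (((a 0 : ℤ) + 1 + (j : ℤ) - (k : ℤ) : ℤ) : ℚ) := by
      rw [hxdef]; push_cast; ring
    rw [hh, Rat.cast_intCast]
    exact pnorm_int_unit _ (by omega) (by omega)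
  have hB3 : ∀ j ∈ (Finset.range (p - b 0 - 1)).filter (fun j => j ≠ k - b 0 - 1),
      ‖((x + ((b 0 : ℚ) + 1 + j) : ℚ) : ℚ_[p])‖ = 1 := by
    intro j hj
    rw [Finset.mem_filter, Finset.mem_range] at hj
    have hh : (x + ((b 0 : ℚ) + 1 + j) : ℚ)
        = (((b 0 : ℤ) + 1 + (j : ℤ) - (k : ℤ) : ℤ) : ℚ) := by
      rw [hxdef]; push_cast; ring
    rw [hh, Rat.cast_intCast]
    exact pnorm_int_unit _ (by omega) (by omega)
  have hB4 : ∀ i, 2 ≤ i → i ≤ nhat →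
      ∀ j ∈ (Finset.range (p - b (i - 1) - 1)).filter (fun j => j ≠ p - 1 - k),
      ‖((-x + (1 + (i : ℚ) * p + (j : ℚ)) : ℚ) : ℚ_[p])‖ = 1 := by
    intro i h2 hle j hj
    rw [Finset.mem_filter, Finset.mem_range] at hj
    have hbi := hbpos (i - 1) (hnhatn i h2 hle)
    have hh : (-x + (1 + (i : ℚ) * p + (j : ℚ)) : ℚ)
        = (((k : ℤ) + 1 + (i : ℤ) * (p : ℤ) + (j : ℤ) : ℤ) : ℚ) := by
      rw [hxdef]; push_cast; ring
    rw [hh, Rat.cast_intCast]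
    refine pnorm_int_eq_one _ fun hd => ?_
    have hd2 : (p : ℤ) ∣ ((k : ℤ) + 1 + (j : ℤ)) := by
      have hip : (p : ℤ) ∣ ((i : ℤ) * (p : ℤ)) := dvd_mul_left _ _
      have h6 := dvd_sub hd hip
      rw [show ((k : ℤ) + 1 + (i : ℤ) * (p : ℤ) + (j : ℤ)) - (i : ℤ) * (p : ℤ)
        = (k : ℤ) + 1 + (j : ℤ) by ring] at h6
      exact h6
    have hd3 : p ∣ (k + 1 + j) := by exact_mod_cast hd2
    have heq : k + 1 + j = p := nat_eq_p_of_dvd hd3 (by omega) (by omega)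
    omega
  -- norm of denP eval
  have hP_norm : ‖(((denP p nhat (a 0) (b 0) b k).eval x : ℚ) : ℚ_[p])‖ = 1 := by
    unfold denP
    simp only [eval_mul, eval_prod, eval_pow, eval_add, eval_neg, eval_X, eval_C]
    rw [Rat.cast_mul, Rat.cast_mul, Rat.cast_mul, norm_mul, norm_mul, norm_mul]
    have e1 : ‖((∏ j ∈ Finset.range (a 0 + 1), (x + (j : ℚ)) ^ 2 : ℚ) : ℚ_[p])‖ = 1 := by
      rw [pcast_prod, norm_prod]
      refine Finset.prod_eq_one fun j hj => ?_
      rw [Rat.cast_pow, norm_pow, hB1 j hj, one_pow]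
    have e2 : ‖((∏ j ∈ Finset.range (b 0 - a 0), (x + ((a 0 : ℚ) + 1 + j)) : ℚ) : ℚ_[p])‖
        = 1 := by
      rw [pcast_prod, norm_prod]
      exact Finset.prod_eq_one fun j hj => hB2 j hj
    have e3 : ‖((∏ j ∈ (Finset.range (p - b 0 - 1)).filter (fun j => j ≠ k - b 0 - 1),
        (x + ((b 0 : ℚ) + 1 + j)) ^ 2 : ℚ) : ℚ_[p])‖ = 1 := by
      rw [pcast_prod, norm_prod]
      refine Finset.prod_eq_one fun j hj => ?_
      rw [Rat.cast_pow, norm_pow, hB3 j hj, one_pow]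
    have e4 : ‖((∏ i ∈ Finset.Icc 2 nhat, ∏ j ∈ (Finset.range (p - b (i - 1) - 1)).filter
        (fun j => j ≠ p - 1 - k), (-x + (1 + (i : ℚ) * p + (j : ℚ))) : ℚ) : ℚ_[p])‖ = 1 := by
      rw [pcast_prod, norm_prod]
      refine Finset.prod_eq_one fun i hi => ?_
      rw [Finset.mem_Icc] at hi
      rw [pcast_prod, norm_prod]
      exact Finset.prod_eq_one fun j hj => hB4 i hi.1 hi.2 j hj
    rw [e1, e2, e3, e4]
    norm_num
  -- norm of D
  have hD_norm : ‖(((RdenNoK p nhat (a 0) (b 0) b k).eval x : ℚ) : ℚ_[p])‖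
      = ((p : ℝ)⁻¹) ^ m := by
    rw [hsplit, eval_mul, Rat.cast_mul, norm_mul, hP_norm, hE_norm, one_mul]
  have hDq_ne : (RdenNoK p nhat (a 0) (b 0) b k).eval x ≠ 0 := by
    intro h
    rw [h] at hD_norm
    simp only [Rat.cast_zero, norm_zero] at hD_norm
    have : (0 : ℝ) < ((p : ℝ)⁻¹) ^ m := by positivity
    rw [← hD_norm] at this
    exact lt_irrefl _ this
  -- norm of P'
  have hP'_norm : ‖(((derivative (denP p nhat (a 0) (b 0) b k)).eval x : ℚ) : ℚ_[p])‖ ≤ 1 := by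
    obtain ⟨z, hz⟩ : ∃ z : ℤ,
        (derivative (denP p nhat (a 0) (b 0) b k)).eval x = (z : ℚ) := by
      refine ⟨(derivative (denPZ p nhat (a 0) (b 0) b k)).eval (-(k : ℤ)), ?_⟩
      have hxz : x = ((-(k : ℤ) : ℤ) : ℚ) := by rw [hxdef]; push_cast; ring
      rw [← denP_map, derivative_map, hxz, eval_intCast_map]
      simp
    rw [hz, Rat.cast_intCast]
    exact Padic.norm_int_le_one z
  -- norm of E'
  have hE'_norm : ‖(((derivative (denE p nhat b k)).eval x : ℚ) : ℚ_[p])‖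
      ≤ (p : ℝ) * ((p : ℝ)⁻¹) ^ m := by
    unfold denE
    rw [eval_derivative_prod, pcast_sum]
    refine pnorm_sum_le _ _ (by positivity) (fun i hi => ?_)
    rw [show (Finset.Icc 2 nhat).filter (fun i => b (i - 1) < k) = Dk from hDkdef.symm] at hi ⊢
    have him := hDk_mem i hi
    have hm1 : 1 ≤ m := by
      rw [hmdef]
      exact Finset.card_pos.mpr ⟨i, hi⟩
    have hders : derivative (-X + C (1 + (i : ℚ) * p + ((p - 1 - k : ℕ) : ℚ))) = -1 := by
      simp
    rw [hders]
    simp only [eval_neg, eval_one, eval_add, eval_X, eval_C]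
    rw [Rat.cast_mul, norm_mul]
    have hrest : ‖((∏ i' ∈ Dk.erase i, (-x + (1 + (i' : ℚ) * p + ((p - 1 - k : ℕ) : ℚ))) : ℚ)
        : ℚ_[p])‖ = ((p : ℝ)⁻¹) ^ (m - 1) := by
      rw [pcast_prod, norm_prod]
      rw [Finset.prod_congr rfl (fun i' hi' => by
        have hmem := hDk_mem i' (Finset.mem_of_mem_erase hi')
        exact hEfac_norm i' hmem.1 hmem.2.1), Finset.prod_const,
        Finset.card_erase_of_mem hi, hmdef]
    rw [hrest]
    have harith : (p : ℝ) * ((p : ℝ)⁻¹) ^ m = ((p : ℝ)⁻¹) ^ (m - 1) := by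
      rw [show m = (m - 1) + 1 by omega, pow_succ]
      have hpne : (p : ℝ) ≠ 0 := by positivity
      rw [Nat.add_sub_cancel, mul_comm, mul_assoc, inv_mul_cancel₀ hpne, mul_one]
    rw [harith]
    simp [norm_neg]
  -- norm of D'
  have hD'_norm : ‖(((derivative (RdenNoK p nhat (a 0) (b 0) b k)).eval x : ℚ) : ℚ_[p])‖
      ≤ (p : ℝ) * ((p : ℝ)⁻¹) ^ m := by
    rw [hsplit, derivative_mul, eval_add, eval_mul, eval_mul, Rat.cast_add, Rat.cast_mul,
      Rat.cast_mul]
    refine le_trans (Padic.nonarchimedean _ _) (max_le ?_ ?_)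
    · rw [norm_mul, hE_norm]
      have h1 : ‖(((derivative (denP p nhat (a 0) (b 0) b k)).eval x : ℚ) : ℚ_[p])‖
          * ((p : ℝ)⁻¹) ^ m ≤ 1 * ((p : ℝ)⁻¹) ^ m :=
        mul_le_mul_of_nonneg_right hP'_norm (by positivity)
      have h2 : (1 : ℝ) * ((p : ℝ)⁻¹) ^ m ≤ (p : ℝ) * ((p : ℝ)⁻¹) ^ m := by
        have : (1 : ℝ) ≤ (p : ℝ) := by exact_mod_cast by omega
        nlinarith [pow_pos hpinv_pos m]
      linarith
    · rw [norm_mul, hP_norm, one_mul]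
      exact hE'_norm
  -- final assembly
  have hQnum : ‖(((derivative (Rnum n p r a)).eval x : ℚ) : ℚ_[p])
        * (((RdenNoK p nhat (a 0) (b 0) b k).eval x : ℚ) : ℚ_[p])
      - (((Rnum n p r a).eval x : ℚ) : ℚ_[p])
        * (((derivative (RdenNoK p nhat (a 0) (b 0) b k)).eval x : ℚ) : ℚ_[p])‖
      ≤ (p : ℝ)⁻¹ * (((p : ℝ)⁻¹) ^ m) ^ 2 := by
    refine le_trans (pnorm_sub_le_max _ _) (max_le ?_ ?_)
    · rw [norm_mul, hD_norm]
      have h1 : ‖(((derivative (Rnum n p r a)).eval x : ℚ) : ℚ_[p])‖ * ((p : ℝ)⁻¹) ^ m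
          ≤ ((p : ℝ)⁻¹) ^ (1 + m) * ((p : ℝ)⁻¹) ^ m :=
        mul_le_mul_of_nonneg_right hN'_norm (by positivity)
      have h2 : ((p : ℝ)⁻¹) ^ (1 + m) * ((p : ℝ)⁻¹) ^ m
          = (p : ℝ)⁻¹ * (((p : ℝ)⁻¹) ^ m) ^ 2 := by
        rw [pow_add]
        ring
      linarith
    · rw [norm_mul]
      have h1 : ‖(((Rnum n p r a).eval x : ℚ) : ℚ_[p])‖
            * ‖(((derivative (RdenNoK p nhat (a 0) (b 0) b k)).eval x : ℚ) : ℚ_[p])‖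
          ≤ ((p : ℝ)⁻¹) ^ (2 + m) * ((p : ℝ) * ((p : ℝ)⁻¹) ^ m) :=
        mul_le_mul hN_norm hD'_norm (norm_nonneg _) (by positivity)
      have h2 : ((p : ℝ)⁻¹) ^ (2 + m) * ((p : ℝ) * ((p : ℝ)⁻¹) ^ m)
          = (p : ℝ)⁻¹ * (((p : ℝ)⁻¹) ^ m) ^ 2 := by
        have hpne : (p : ℝ) ≠ 0 := by positivity
        rw [pow_add]
        field_simp
      linarith
  set Q : ℚ := ((derivative (Rnum n p r a)).eval x
        * (RdenNoK p nhat (a 0) (b 0) b k).eval x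
      - (Rnum n p r a).eval x
        * (derivative (RdenNoK p nhat (a 0) (b 0) b k)).eval x)
      / ((RdenNoK p nhat (a 0) (b 0) b k).eval x) ^ 2 with hQdef
  have hQle : ‖((Q : ℚ) : ℚ_[p])‖ ≤ (p : ℝ)⁻¹ := by
    rw [hQdef, Rat.cast_div, Rat.cast_sub, Rat.cast_mul, Rat.cast_mul, Rat.cast_pow, norm_div,
      norm_pow, hD_norm]
    rw [div_le_iff₀ (by positivity)]
    calc _ ≤ (p : ℝ)⁻¹ * (((p : ℝ)⁻¹) ^ m) ^ 2 := hQnum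
      _ = (p : ℝ)⁻¹ * (((p : ℝ)⁻¹) ^ m) ^ 2 := rfl
  have hpQne : (p : ℚ_[p]) ≠ 0 := by
    exact_mod_cast Nat.cast_ne_zero.mpr (by omega : p ≠ 0)
  have hmem : ‖((Q : ℚ) : ℚ_[p]) * (p : ℚ_[p])⁻¹‖ ≤ 1 := by
    rw [norm_mul, norm_inv, Padic.norm_p, inv_inv]
    calc ‖((Q : ℚ) : ℚ_[p])‖ * (p : ℝ) ≤ (p : ℝ)⁻¹ * (p : ℝ) :=
          mul_le_mul_of_nonneg_right hQle (by positivity)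
      _ = 1 := by
          field_simp
  refine ⟨hDq_ne, ⟨⟨((Q : ℚ) : ℚ_[p]) * (p : ℚ_[p])⁻¹, hmem⟩, ?_⟩⟩
  show ((Q : ℚ) : ℚ_[p]) = (p : ℚ_[p]) * (((Q : ℚ) : ℚ_[p]) * (p : ℚ_[p])⁻¹)
  field_simp
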